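/- arXiv:1403.7114 — 4 statements merged into one kernel-verified Lean document; each statement's English description precedes it below -/
import Mathlib

section
/- Let X_a be square matrices defined by (X_a)_b^c = −f_{ab}^c + h^c_I d^I_{ab}, where f_{ab}^c is antisymmetric in a,b, d^I_{ab} is symmetric in a,b, and the constants satisfy the six-dimensional tensor hierarchy constraints. Then the matrix commutator satisfies [X_a, X_b] = −X_{ab}^c X_c, where X_{ab}^c = −f_{ab}^c + h^c_I d^I_{ab}. Consequently the product (x_a ∘ x_b) := X_{ab}^c x_c defines a Leibniz algebra: x_a ∘ (x_b ∘ x_c) = (x_a ∘ x_b) ∘ x_c + x_b ∘ (x_a ∘ x_c). -/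
open Finset

/-- With `(X_a)_b{}^c = −f_{ab}{}^c + h^c_I d^I_{ab}` and the six-dimensional
tensor hierarchy constraints, the matrices satisfy `[X_a, X_b] = −X_{ab}{}^c X_c`, and
consequently the bilinear product `(x ∘ y)^c = x^a y^b X_{ab}{}^c` defines a Leibniz
algebra: `x ∘ (y ∘ z) = (x ∘ y) ∘ z + y ∘ (x ∘ z)`. -/
theorem stmt8 {ι κ : Type*} [Fintype ι] [Fintype κ] [DecidableEq ι]
    (f : ι → ι → ι → ℝ)   -- f a b c = f_{ab}^c, antisymmetric in a b
    (d : κ → ι → ι → ℝ)   -- d I a b = d^I_{ab}, symmetric in a b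
    (h : ι → κ → ℝ)       -- h c I = h^c_I
    (g : κ → ι → ℝ)       -- g I r = g^{Ir}
    (b : κ → ι → ι → ℝ)   -- b I r s = b_{Irs}
    (hf : ∀ a b' c, f a b' c = - f b' a c)
    (hd : ∀ I a b', d I a b' = d I b' a)
    -- constraint (i)
    (h1 : ∀ I r u v,
      ∑ s, ∑ J, (d J r u * d I v s + d J r v * d I u s - 2 * d I r s * d J u v) * h s J
        = ∑ s, (f r u s * d I v s + f r v s * d I u s)
          - ∑ s, ∑ J, b J s r * d J u v * g I s)
    -- constraint (ii)
    (h2 : ∀ p q r s,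
      ∑ u, (f p q u * f r u s + f q r u * f p u s + f r p u * f q u s)
        = (1/3 : ℝ) * ∑ u, ∑ I, h s I * (d I u p * f q r u + d I u q * f r p u + d I u r * f p q u))
    -- constraint (iii)
    (h3 : ∀ s t I, ∑ r, f r s t * h r I = ∑ r, ∑ J, d J r s * h t J * h r I)
    -- h^r_I g^{It} = 0
    (h4 : ∀ r t, ∑ I, h r I * g I t = 0) :
    let Xc : ι → ι → ι → ℝ := fun a b' c => - f a b' c + ∑ I, h c I * d I a b'
    let X : ι → Matrix ι ι ℝ := fun a => Matrix.of fun c e => Xc a c e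
    let prod : (ι → ℝ) → (ι → ℝ) → (ι → ℝ) :=
      fun x y c => ∑ a, ∑ b', x a * y b' * Xc a b' c
    (∀ a b', X a * X b' - X b' * X a = - ∑ c, Xc a b' c • X c) ∧
    (∀ x y z : ι → ℝ, prod x (prod y z) = prod (prod x y) z + prod y (prod x z)) := by
  intro Xc X prod
  set H : ι → ι → ι → ℝ := fun p q e => ∑ I, h e I * d I p q with hH
  have hXcH : ∀ a b c, Xc a b c = -f a b c + H a b c := fun _ _ _ => rfl
  have Hsymm : ∀ p q e, H p q e = H q p e := by
    intro p q e; simp only [hH]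
    exact Finset.sum_congr rfl fun I _ => by rw [hd]
  -- contracted constraint (iii)
  have hA : ∀ p q s t, (∑ r, f r s t * H p q r) = ∑ r, H r s t * H p q r := by
    intro p q s t
    simp only [hH]
    calc (∑ r, f r s t * ∑ I, h r I * d I p q)
        = ∑ r, ∑ I, f r s t * h r I * d I p q := Finset.sum_congr rfl fun r _ => by
            rw [Finset.mul_sum]; exact Finset.sum_congr rfl fun I _ => by ring
      _ = ∑ I, ∑ r, f r s t * h r I * d I p q := Finset.sum_comm
      _ = ∑ I, (∑ r, f r s t * h r I) * d I p q := Finset.sum_congr rfl fun I _ =>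
            (Finset.sum_mul _ _ _).symm
      _ = ∑ I, (∑ r, ∑ J, d J r s * h t J * h r I) * d I p q :=
            Finset.sum_congr rfl fun I _ => by rw [h3]
      _ = ∑ I, ∑ r, ∑ J, d J r s * h t J * h r I * d I p q := Finset.sum_congr rfl fun I _ => by
            rw [Finset.sum_mul]; exact Finset.sum_congr rfl fun r _ => by rw [Finset.sum_mul]
      _ = ∑ r, ∑ I, ∑ J, d J r s * h t J * h r I * d I p q := Finset.sum_comm
      _ = ∑ r, (∑ I, h t I * d I r s) * ∑ I, h r I * d I p q := by
            refine Finset.sum_congr rfl fun r _ => ?_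
            rw [Finset.sum_mul_sum, Finset.sum_comm]
            exact Finset.sum_congr rfl fun J _ => Finset.sum_congr rfl fun I _ => by ring
  -- symmetry lemmas for atoms
  have sS1 : ∀ p q r w, (∑ e, f q p e * f r e w) = -∑ e, f p q e * f r e w := by
    intro p q r w
    rw [← Finset.sum_neg_distrib]
    exact Finset.sum_congr rfl fun e _ => by rw [hf q p]; ring
  have sS2 : ∀ p q r w, (∑ e, f q p e * H r e w) = -∑ e, f p q e * H r e w := by
    intro p q r w
    rw [← Finset.sum_neg_distrib]
    exact Finset.sum_congr rfl fun e _ => by rw [hf q p]; ring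
  have sS3 : ∀ p q r w, (∑ e, H q p e * H r e w) = ∑ e, H p q e * H r e w :=
    fun p q r w => Finset.sum_congr rfl fun e _ => by rw [Hsymm q p]
  -- R4 : H-f sums reduce to H-H sums
  have R4 : ∀ p q r w, (∑ e, H p q e * f r e w) = -∑ e, H p q e * H r e w := by
    intro p q r w
    have h' := hA p q r w
    calc ∑ e, H p q e * f r e w
        = -∑ e, f e r w * H p q e := by
          rw [← Finset.sum_neg_distrib]
          exact Finset.sum_congr rfl fun e _ => by rw [hf e r]; ring
      _ = -∑ e, H e r w * H p q e := by rw [h']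
      _ = -∑ e, H p q e * H r e w := by
          congr 1
          exact Finset.sum_congr rfl fun e _ => by rw [Hsymm e r]; ring
  -- contracted constraint (ii)
  have hC : ∀ p q r w,
      (∑ u, f p q u * f r u w) + (∑ u, f q r u * f p u w) + (∑ u, f r p u * f q u w)
        = (1/3 : ℝ) * ((∑ u, f q r u * H p u w) + (∑ u, f r p u * H q u w)
            + ∑ u, f p q u * H r u w) := by
    intro p q r w
    calc (∑ u, f p q u * f r u w) + (∑ u, f q r u * f p u w) + (∑ u, f r p u * f q u w)
        = ∑ u, (f p q u * f r u w + f q r u * f p u w + f r p u * f q u w) := by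
          rw [← Finset.sum_add_distrib, ← Finset.sum_add_distrib]
      _ = (1/3 : ℝ) * ∑ u, ∑ I, h w I * (d I u p * f q r u + d I u q * f r p u + d I u r * f p q u) :=
          h2 p q r w
      _ = (1/3 : ℝ) * ∑ u, (f q r u * H p u w + f r p u * H q u w + f p q u * H r u w) := by
          congr 1
          refine Finset.sum_congr rfl fun u _ => ?_
          simp only [hH]
          rw [Finset.mul_sum, Finset.mul_sum, Finset.mul_sum, ← Finset.sum_add_distrib,
            ← Finset.sum_add_distrib]
          exact Finset.sum_congr rfl fun I _ => by rw [hd I u p, hd I u q, hd I u r]; ring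
      _ = (1/3 : ℝ) * ((∑ u, f q r u * H p u w) + (∑ u, f r p u * H q u w)
            + ∑ u, f p q u * H r u w) := by
          rw [Finset.sum_add_distrib, Finset.sum_add_distrib]
  -- contracted constraint (i)
  have hB : ∀ r u v w,
      (∑ e, H r u e * H v e w) + (∑ e, H r v e * H u e w) - 2 * (∑ e, H u v e * H r e w)
        = (∑ e, f r u e * H v e w) + ∑ e, f r v e * H u e w := by
    intro r u v w
    have base : ∑ I, h w I *
          (∑ s, ∑ J, (d J r u * d I v s + d J r v * d I u s - 2 * d I r s * d J u v) * h s J)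
        = ∑ I, h w I * ((∑ s, (f r u s * d I v s + f r v s * d I u s))
            - ∑ s, ∑ J, b J s r * d J u v * g I s) :=
      Finset.sum_congr rfl fun I _ => by rw [h1]
    have lhs1 : (∑ e, H r u e * H v e w) + (∑ e, H r v e * H u e w)
          - 2 * (∑ e, H u v e * H r e w)
        = ∑ I, h w I *
            (∑ s, ∑ J, (d J r u * d I v s + d J r v * d I u s - 2 * d I r s * d J u v) * h s J) := by
      simp only [hH]
      have merge : ∀ (A B C : ι → κ → κ → ℝ),
          ((∑ e, ∑ J, ∑ I, A e J I) + ∑ e, ∑ J, ∑ I, B e J I)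
              - 2 * ∑ e, ∑ J, ∑ I, C e J I
            = ∑ e, ∑ J, ∑ I, (A e J I + B e J I - 2 * C e J I) := by
        intro A B C
        rw [Finset.mul_sum, ← Finset.sum_add_distrib, ← Finset.sum_sub_distrib]
        refine Finset.sum_congr rfl fun e _ => ?_
        rw [Finset.mul_sum, ← Finset.sum_add_distrib, ← Finset.sum_sub_distrib]
        refine Finset.sum_congr rfl fun J _ => ?_
        rw [Finset.mul_sum, ← Finset.sum_add_distrib, ← Finset.sum_sub_distrib]
      calc ((∑ e, (∑ I, h e I * d I r u) * ∑ I, h w I * d I v e)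
              + ∑ e, (∑ I, h e I * d I r v) * ∑ I, h w I * d I u e)
            - 2 * ∑ e, (∑ I, h e I * d I u v) * ∑ I, h w I * d I r e
          = ((∑ e, ∑ J, ∑ I, (h e J * d J r u) * (h w I * d I v e))
              + ∑ e, ∑ J, ∑ I, (h e J * d J r v) * (h w I * d I u e))
            - 2 * ∑ e, ∑ J, ∑ I, (h e J * d J u v) * (h w I * d I r e) := by
            congr 1
            · congr 1 <;> exact Finset.sum_congr rfl fun e _ => Finset.sum_mul_sum _ _ _ _
            · congr 1
              exact Finset.sum_congr rfl fun e _ => Finset.sum_mul_sum _ _ _ _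
        _ = ∑ e, ∑ J, ∑ I, ((h e J * d J r u) * (h w I * d I v e)
              + (h e J * d J r v) * (h w I * d I u e)
              - 2 * ((h e J * d J u v) * (h w I * d I r e))) := merge _ _ _
        _ = ∑ e, ∑ J, ∑ I, h w I *
              ((d J r u * d I v e + d J r v * d I u e - 2 * d I r e * d J u v) * h e J) :=
            Finset.sum_congr rfl fun e _ => Finset.sum_congr rfl fun J _ =>
              Finset.sum_congr rfl fun I _ => by ring
        _ = ∑ e, ∑ I, ∑ J, h w I *
              ((d J r u * d I v e + d J r v * d I u e - 2 * d I r e * d J u v) * h e J) :=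
            Finset.sum_congr rfl fun e _ => Finset.sum_comm
        _ = ∑ I, ∑ e, ∑ J, h w I *
              ((d J r u * d I v e + d J r v * d I u e - 2 * d I r e * d J u v) * h e J) :=
            Finset.sum_comm
        _ = ∑ I, h w I *
              (∑ s, ∑ J, (d J r u * d I v s + d J r v * d I u s - 2 * d I r s * d J u v) * h s J) := by
            refine Finset.sum_congr rfl fun I _ => ?_
            rw [Finset.mul_sum]
            exact Finset.sum_congr rfl fun s _ => by rw [Finset.mul_sum]
    have rhs1 : ∑ I, h w I * ((∑ s, (f r u s * d I v s + f r v s * d I u s))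
          - ∑ s, ∑ J, b J s r * d J u v * g I s)
        = (∑ e, f r u e * H v e w) + ∑ e, f r v e * H u e w := by
      have z0 : ∑ I, h w I * (∑ s, ∑ J, b J s r * d J u v * g I s) = 0 := by
        calc ∑ I, h w I * (∑ s, ∑ J, b J s r * d J u v * g I s)
            = ∑ I, ∑ s, ∑ J, h w I * (b J s r * d J u v * g I s) := by
              refine Finset.sum_congr rfl fun I _ => ?_
              rw [Finset.mul_sum]
              exact Finset.sum_congr rfl fun s _ => by rw [Finset.mul_sum]
          _ = ∑ s, ∑ I, ∑ J, h w I * (b J s r * d J u v * g I s) := Finset.sum_comm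
          _ = ∑ s, ∑ J, ∑ I, h w I * (b J s r * d J u v * g I s) :=
              Finset.sum_congr rfl fun s _ => Finset.sum_comm
          _ = ∑ s, ∑ J, (b J s r * d J u v) * ∑ I, h w I * g I s := by
              refine Finset.sum_congr rfl fun s _ => Finset.sum_congr rfl fun J _ => ?_
              rw [Finset.mul_sum]
              exact Finset.sum_congr rfl fun I _ => by ring
          _ = 0 := by
              refine Finset.sum_eq_zero fun s _ => Finset.sum_eq_zero fun J _ => ?_
              rw [h4, mul_zero]
      calc ∑ I, h w I * ((∑ s, (f r u s * d I v s + f r v s * d I u s))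
              - ∑ s, ∑ J, b J s r * d J u v * g I s)
          = (∑ I, h w I * ∑ s, (f r u s * d I v s + f r v s * d I u s))
            - ∑ I, h w I * (∑ s, ∑ J, b J s r * d J u v * g I s) := by
            rw [← Finset.sum_sub_distrib]
            exact Finset.sum_congr rfl fun I _ => by ring
        _ = ∑ I, h w I * ∑ s, (f r u s * d I v s + f r v s * d I u s) := by rw [z0, sub_zero]
        _ = ∑ I, ∑ s, h w I * (f r u s * d I v s + f r v s * d I u s) :=
            Finset.sum_congr rfl fun I _ => by rw [Finset.mul_sum]
        _ = ∑ s, ∑ I, h w I * (f r u s * d I v s + f r v s * d I u s) := Finset.sum_comm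
        _ = ∑ s, (f r u s * ∑ I, h w I * d I v s + f r v s * ∑ I, h w I * d I u s) := by
            refine Finset.sum_congr rfl fun s _ => ?_
            rw [Finset.mul_sum, Finset.mul_sum, ← Finset.sum_add_distrib]
            exact Finset.sum_congr rfl fun I _ => by ring
        _ = (∑ e, f r u e * H v e w) + ∑ e, f r v e * H u e w := by
            rw [Finset.sum_add_distrib]
    rw [lhs1, base, rhs1]
  -- expansion lemmas
  have expL : ∀ p q r w, (∑ e, Xc p q e * Xc r e w)
      = (∑ e, f p q e * f r e w) - (∑ e, f p q e * H r e w) - (∑ e, H p q e * f r e w)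
        + ∑ e, H p q e * H r e w := by
    intro p q r w
    rw [show (∑ e, Xc p q e * Xc r e w)
        = ∑ e, (f p q e * f r e w - f p q e * H r e w - H p q e * f r e w + H p q e * H r e w)
        from Finset.sum_congr rfl fun e _ => by rw [hXcH, hXcH]; ring]
    rw [Finset.sum_add_distrib, Finset.sum_sub_distrib, Finset.sum_sub_distrib]
  have expR : ∀ p q r w, (∑ u, Xc p q u * Xc u r w)
      = -(∑ e, f p q e * f r e w) - (∑ e, f p q e * H r e w) + (∑ e, H p q e * f r e w)
        + ∑ e, H p q e * H r e w := by
    intro p q r w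
    rw [show (∑ u, Xc p q u * Xc u r w)
        = ∑ u, (-(f p q u * f r u w) - f p q u * H r u w + H p q u * f r u w + H p q u * H r u w)
        from Finset.sum_congr rfl fun u _ => by
          rw [hXcH, hXcH, hf u r, Hsymm u r]; ring]
    rw [Finset.sum_add_distrib, Finset.sum_add_distrib, Finset.sum_sub_distrib,
      Finset.sum_neg_distrib]
  -- the key commutator identity
  have KEY : ∀ a b' c w, (∑ e, Xc a c e * Xc b' e w) - (∑ e, Xc b' c e * Xc a e w)
      = -∑ u, Xc a b' u * Xc u c w := by
    intro a b' c w
    rw [expL a c b' w, expL b' c a w, expR a b' c w]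
    linear_combination (-1 : ℝ) * hC a b' c w - (4/3 : ℝ) * hB b' a c w
      - (2/3 : ℝ) * hB c a b' w - R4 a c b' w + R4 b' c a w + R4 a b' c w
      - (4/3 : ℝ) * sS2 a b' c w + (4/3 : ℝ) * sS3 a b' c w + sS1 a c b' w - sS2 a c b' w
      + (2/3 : ℝ) * sS3 a c b' w - (2/3 : ℝ) * sS2 b' c a w + (2/3 : ℝ) * sS3 b' c a w
  constructor
  · -- matrix identity
    intro a b'
    ext p q
    have := KEY a b' p q
    simpa [X, Matrix.mul_apply, Matrix.sub_apply, Matrix.neg_apply, Matrix.sum_apply,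
      Matrix.smul_apply, smul_eq_mul, Matrix.of_apply] using this
  · -- Leibniz identity
    have LEM2a : ∀ a p q w, (∑ u, H a p u * Xc u q w) = 0 := by
      intro a p q w
      have h' := hA a p q w
      calc ∑ u, H a p u * Xc u q w
          = ∑ u, (H u q w * H a p u - f u q w * H a p u) :=
            Finset.sum_congr rfl fun u _ => by rw [hXcH]; ring
        _ = (∑ u, H u q w * H a p u) - ∑ u, f u q w * H a p u := Finset.sum_sub_distrib _ _
        _ = 0 := by rw [h']; ring
    have zsum : ∀ a p q w, (∑ u, Xc a p u * Xc u q w) + (∑ u, Xc p a u * Xc u q w) = 0 := by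
      intro a p q w
      calc (∑ u, Xc a p u * Xc u q w) + (∑ u, Xc p a u * Xc u q w)
          = ∑ u, (Xc a p u * Xc u q w + Xc p a u * Xc u q w) := Finset.sum_add_distrib.symm
        _ = ∑ u, 2 * (H a p u * Xc u q w) := Finset.sum_congr rfl fun u _ => by
            rw [hXcH a p u, hXcH p a u, hf p a, Hsymm p a]; ring
        _ = 2 * ∑ u, H a p u * Xc u q w := by rw [Finset.mul_sum]
        _ = 0 := by rw [LEM2a]; ring
    have L2 : ∀ a p q w, (∑ e, Xc p q e * Xc a e w)
        = (∑ u, Xc a p u * Xc u q w) + ∑ e, Xc a q e * Xc p e w := by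
      intro a p q w
      linear_combination KEY p a q w - zsum a p q w
    have reord3 : ∀ (G : ι → ι → ι → ℝ),
        (∑ i, ∑ j, ∑ k, G i j k) = ∑ j, ∑ k, ∑ i, G i j k := by
      intro G
      calc (∑ i, ∑ j, ∑ k, G i j k) = ∑ j, ∑ i, ∑ k, G i j k := Finset.sum_comm
        _ = ∑ j, ∑ k, ∑ i, G i j k := Finset.sum_congr rfl fun j _ => Finset.sum_comm
    have reord4 : ∀ (G : ι → ι → ι → ι → ℝ),
        (∑ i, ∑ j, ∑ k, ∑ l, G i j k l) = ∑ k, ∑ l, ∑ j, ∑ i, G i j k l := by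
      intro G
      calc (∑ i, ∑ j, ∑ k, ∑ l, G i j k l)
          = ∑ i, ∑ k, ∑ j, ∑ l, G i j k l := Finset.sum_congr rfl fun i _ => Finset.sum_comm
        _ = ∑ k, ∑ i, ∑ j, ∑ l, G i j k l := Finset.sum_comm
        _ = ∑ k, ∑ i, ∑ l, ∑ j, G i j k l :=
            Finset.sum_congr rfl fun k _ => Finset.sum_congr rfl fun i _ => Finset.sum_comm
        _ = ∑ k, ∑ l, ∑ i, ∑ j, G i j k l := Finset.sum_congr rfl fun k _ => Finset.sum_comm
        _ = ∑ k, ∑ l, ∑ j, ∑ i, G i j k l :=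
            Finset.sum_congr rfl fun k _ => Finset.sum_congr rfl fun l _ => Finset.sum_comm
    have reordE : ∀ (G : ι → ι → ι → ι → ℝ),
        (∑ i, ∑ j, ∑ k, ∑ l, G i j k l) = ∑ k, ∑ i, ∑ l, ∑ j, G i j k l := by
      intro G
      calc (∑ i, ∑ j, ∑ k, ∑ l, G i j k l)
          = ∑ i, ∑ k, ∑ j, ∑ l, G i j k l := Finset.sum_congr rfl fun i _ => Finset.sum_comm
        _ = ∑ k, ∑ i, ∑ j, ∑ l, G i j k l := Finset.sum_comm
        _ = ∑ k, ∑ i, ∑ l, ∑ j, G i j k l :=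
            Finset.sum_congr rfl fun k _ => Finset.sum_congr rfl fun i _ => Finset.sum_comm
    intro x y z
    funext dd
    have e1 : prod x (prod y z) dd
        = ∑ a, ∑ p, ∑ q, x a * y p * z q * ∑ e, Xc p q e * Xc a e dd := by
      calc prod x (prod y z) dd
          = ∑ a, ∑ e, x a * (∑ p, ∑ q, y p * z q * Xc p q e) * Xc a e dd := rfl
        _ = ∑ a, ∑ e, ∑ p, ∑ q, x a * y p * z q * (Xc p q e * Xc a e dd) := by
            refine Finset.sum_congr rfl fun a _ => Finset.sum_congr rfl fun e _ => ?_
            simp only [Finset.mul_sum, Finset.sum_mul]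
            exact Finset.sum_congr rfl fun p _ => Finset.sum_congr rfl fun q _ => by ring
        _ = ∑ a, ∑ p, ∑ q, ∑ e, x a * y p * z q * (Xc p q e * Xc a e dd) :=
            Finset.sum_congr rfl fun a _ => reord3 _
        _ = ∑ a, ∑ p, ∑ q, x a * y p * z q * ∑ e, Xc p q e * Xc a e dd :=
            Finset.sum_congr rfl fun a _ => Finset.sum_congr rfl fun p _ =>
              Finset.sum_congr rfl fun q _ => (Finset.mul_sum _ _ _).symm
    have e2 : prod (prod x y) z dd
        = ∑ a, ∑ p, ∑ q, x a * y p * z q * ∑ u, Xc a p u * Xc u q dd := by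
      calc prod (prod x y) z dd
          = ∑ u, ∑ q, (∑ a, ∑ p, x a * y p * Xc a p u) * z q * Xc u q dd := rfl
        _ = ∑ u, ∑ q, ∑ a, ∑ p, x a * y p * z q * (Xc a p u * Xc u q dd) := by
            refine Finset.sum_congr rfl fun u _ => Finset.sum_congr rfl fun q _ => ?_
            simp only [Finset.mul_sum, Finset.sum_mul]
            exact Finset.sum_congr rfl fun a _ => Finset.sum_congr rfl fun p _ => by ring
        _ = ∑ a, ∑ p, ∑ q, ∑ u, x a * y p * z q * (Xc a p u * Xc u q dd) := reord4 _
        _ = ∑ a, ∑ p, ∑ q, x a * y p * z q * ∑ u, Xc a p u * Xc u q dd :=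
            Finset.sum_congr rfl fun a _ => Finset.sum_congr rfl fun p _ =>
              Finset.sum_congr rfl fun q _ => (Finset.mul_sum _ _ _).symm
    have e3 : prod y (prod x z) dd
        = ∑ a, ∑ p, ∑ q, x a * y p * z q * ∑ e, Xc a q e * Xc p e dd := by
      calc prod y (prod x z) dd
          = ∑ p, ∑ e, y p * (∑ a, ∑ q, x a * z q * Xc a q e) * Xc p e dd := rfl
        _ = ∑ p, ∑ e, ∑ a, ∑ q, x a * y p * z q * (Xc a q e * Xc p e dd) := by
            refine Finset.sum_congr rfl fun p _ => Finset.sum_congr rfl fun e _ => ?_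
            simp only [Finset.mul_sum, Finset.sum_mul]
            exact Finset.sum_congr rfl fun a _ => Finset.sum_congr rfl fun q _ => by ring
        _ = ∑ a, ∑ p, ∑ q, ∑ e, x a * y p * z q * (Xc a q e * Xc p e dd) := reordE _
        _ = ∑ a, ∑ p, ∑ q, x a * y p * z q * ∑ e, Xc a q e * Xc p e dd :=
            Finset.sum_congr rfl fun a _ => Finset.sum_congr rfl fun p _ =>
              Finset.sum_congr rfl fun q _ => (Finset.mul_sum _ _ _).symm
    show prod x (prod y z) dd = prod (prod x y) z dd + prod y (prod x z) dd
    rw [e1, e2, e3, ← Finset.sum_add_distrib]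
    refine Finset.sum_congr rfl fun a _ => ?_
    rw [← Finset.sum_add_distrib]
    refine Finset.sum_congr rfl fun p _ => ?_
    rw [← Finset.sum_add_distrib]
    refine Finset.sum_congr rfl fun q _ => ?_
    linear_combination (x a * y p * z q) * L2 a p q dd
end

section
/- Under the six-dimensional tensor hierarchy constraints, the symmetric part of the structure constants is annihilated by the generators: the identity X_{(ab)}^c X_c = 0 holds, where X_{ab}^c = −f_{ab}^c + h^c_I d^I_{ab} and X_{(ab)}^c = h^c_I d^I_{ab}, and (X_c)_d^e = −f_{cd}^e + h^e_J d^J_{cd}. -/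
open Finset

/-- Under the six-dimensional tensor hierarchy constraints, the symmetric part
of the structure constants is annihilated by the generators:
`X_{(ab)}{}^c X_c = 0`, i.e. `∑_c (h^c_I d^I_{ab}) (X_c)_d{}^e = 0` for all `a,b,d,e`,
where `(X_c)_d{}^e = −f_{cd}{}^e + h^e_J d^J_{cd}`. -/
theorem stmt9 {ι κ : Type*} [Fintype ι] [Fintype κ]
    (f : ι → ι → ι → ℝ)   -- f a b c = f_{ab}^c, antisymmetric in a b
    (d : κ → ι → ι → ℝ)   -- d I a b = d^I_{ab}, symmetric in a b
    (h : ι → κ → ℝ)       -- h c I = h^c_I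
    (g : κ → ι → ℝ)       -- g I r = g^{Ir}
    (b : κ → ι → ι → ℝ)   -- b I r s = b_{Irs}
    (hf : ∀ a b' c, f a b' c = - f b' a c)
    (hd : ∀ I a b', d I a b' = d I b' a)
    -- first tensor hierarchy identity
    (h1 : ∀ I r u v,
      ∑ s, ∑ J, (d J r u * d I v s + d J r v * d I u s - 2 * d I r s * d J u v) * h s J
        = ∑ s, (f r u s * d I v s + f r v s * d I u s)
          - ∑ s, ∑ J, b J s r * d J u v * g I s)
    -- f_{rs}^t h^r_I − d^J_{rs} h^t_J h^r_I = 0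
    (h3 : ∀ s t I, ∑ r, f r s t * h r I = ∑ r, ∑ J, d J r s * h t J * h r I)
    -- h^r_I g^{It} = 0
    (h4 : ∀ r t, ∑ I, h r I * g I t = 0) :
    ∀ a b' dd e : ι,
      ∑ c, (∑ I, h c I * d I a b') * (- f c dd e + ∑ J, h e J * d J c dd) = 0 := by
  intro a b' dd e
  have key : ∀ I, ∑ c, h c I * (- f c dd e + ∑ J, h e J * d J c dd) = 0 := by
    intro I
    have h3' := h3 dd e I
    have expand : ∑ c, h c I * (- f c dd e + ∑ J, h e J * d J c dd)
        = (∑ c, ∑ J, d J c dd * h e J * h c I) - ∑ c, f c dd e * h c I := by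
      rw [← Finset.sum_sub_distrib]
      refine Finset.sum_congr rfl fun c _ => ?_
      have hs : ∑ J, h c I * (h e J * d J c dd) = ∑ J, d J c dd * h e J * h c I :=
        Finset.sum_congr rfl fun J _ => by ring
      simp only [mul_add, mul_neg, Finset.mul_sum]
      rw [hs]; ring
    rw [expand, ← h3', sub_self]
  calc ∑ c, (∑ I, h c I * d I a b') * (- f c dd e + ∑ J, h e J * d J c dd)
      = ∑ c, ∑ I, d I a b' * (h c I * (- f c dd e + ∑ J, h e J * d J c dd)) := by
        refine Finset.sum_congr rfl fun c _ => ?_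
        rw [Finset.sum_mul]
        exact Finset.sum_congr rfl fun I _ => by ring
    _ = ∑ I, d I a b' * ∑ c, h c I * (- f c dd e + ∑ J, h e J * d J c dd) := by
        rw [Finset.sum_comm]
        exact Finset.sum_congr rfl fun I _ => (Finset.mul_sum _ _ _).symm
    _ = 0 := by simp [key]
end

section
/- Under the six-dimensional tensor hierarchy constraints, the identity g^{Kr} h^s_{[I} b_{J]rs} = 0 holds, i.e., g^{Kr}(h^s_I b_{Jrs} − h^s_J b_{Irs}) = 0. -/
open Finset

/-- Under the six-dimensional tensor hierarchy constraints (the full system of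
algebraic identities among `b, d, g, h, f`), the identity `g^{Kr} h^s_{[I} b_{J]rs} = 0`
holds, i.e. `∑_{r,s} g^{Kr} (h^s_I b_{Jrs} − h^s_J b_{Irs}) = 0`. -/
theorem stmt10 {ι κ : Type*} [Fintype ι] [Fintype κ]
    (f : ι → ι → ι → ℝ)   -- f a b c = f_{ab}^c, antisymmetric in a b
    (d : κ → ι → ι → ℝ)   -- d I a b = d^I_{ab}, symmetric in a b
    (h : ι → κ → ℝ)       -- h c I = h^c_I
    (g : κ → ι → ℝ)       -- g I r = g^{Ir}
    (b : κ → ι → ι → ℝ)   -- b I r s = b_{Irs}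
    (hf : ∀ a b' c, f a b' c = - f b' a c)
    (hd : ∀ I a b', d I a b' = d I b' a)
    -- (1) 2(d^J_{r(u} d^I_{v)s} − d^I_{rs} d^J_{uv}) h^s_J = 2 f_{r(u}^s d^I_{v)s} − b_{Jsr} d^J_{uv} g^{Is}
    (h1 : ∀ I r u v,
      ∑ s, ∑ J, (d J r u * d I v s + d J r v * d I u s - 2 * d I r s * d J u v) * h s J
        = ∑ s, (f r u s * d I v s + f r v s * d I u s)
          - ∑ s, ∑ J, b J s r * d J u v * g I s)
    -- (2) (d^J_{rs} b_{Iut} + d^J_{rt} b_{Isu} + 2 d^K_{ru} b_{Kst} δ^J_I) h^u_J = f_{rs}^u b_{Iut} + f_{rt}^u b_{Isu} + g^{Ju} b_{Iur} b_{Jst}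
    (h2 : ∀ I r s t,
      ∑ u, ∑ J, (d J r s * b I u t + d J r t * b I s u) * h u J
          + 2 * ∑ u, ∑ K, d K r u * b K s t * h u I
        = ∑ u, (f r s u * b I u t + f r t u * b I s u)
          + ∑ u, ∑ J, g J u * b I u r * b J s t)
    -- (3) f_{[pq}^u f_{r]u}^s − (1/3) h_I^s d^I_{u[p} f_{qr]}^u = 0
    (h3 : ∀ p q r s,
      ∑ u, (f p q u * f r u s + f q r u * f p u s + f r p u * f q u s)
        = (1/3 : ℝ) * ∑ u, ∑ I, h s I * (d I u p * f q r u + d I u q * f r p u + d I u r * f p q u))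
    -- (4) h^r_I g^{It} = 0
    (h4 : ∀ r t, ∑ I, h r I * g I t = 0)
    -- (5) f_{rs}^t h^r_I − d^J_{rs} h^t_J h^r_I = 0
    (h5 : ∀ s t I, ∑ r, f r s t * h r I = ∑ r, ∑ J, d J r s * h t J * h r I)
    -- (6) g^{Js} h^r_K b_{Isr} − 2 h_I^s h_K^r d^J_{rs} = 0
    (h6 : ∀ I J K,
      ∑ s, ∑ r, g J s * h r K * b I s r = 2 * ∑ r, ∑ s, h s I * h r K * d J r s)
    -- (7) −f_{rt}^s g^{It} + d^J_{rt} h^s_J g^{It} − g^{It} g^{Js} b_{Jtr} = 0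
    (h7 : ∀ r s I,
      ∑ t, f r t s * g I t
        = ∑ t, ∑ J, d J r t * h s J * g I t - ∑ t, ∑ J, g I t * g J s * b J t r)
    -- (8) b_{Jr(s} d^J_{uv)} = 0
    (h8 : ∀ r s u v,
      ∑ J, (b J r s * d J u v + b J r u * d J v s + b J r v * d J s u) = 0) :
    ∀ K I J : κ, ∑ r, ∑ s, g K r * (h s I * b J r s - h s J * b I r s) = 0 := by
  intro K I J
  have e1 := h6 J K I
  have e2 := h6 I K J
  have key : ∑ r, ∑ s, h s J * h r I * d K r s = ∑ r, ∑ s, h s I * h r J * d K r s := by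
    rw [Finset.sum_comm]
    exact Finset.sum_congr rfl fun r _ => Finset.sum_congr rfl fun s _ => by rw [hd]; ring
  simp only [mul_sub, Finset.sum_sub_distrib, ← mul_assoc]
  rw [e1, e2, key, sub_self]
end

section
/- Let 𝔤 be a Lie algebra. On the 4-term graded space 𝔤 ⊕ 𝔤[1]_l ⊕ 𝔤[1]_r ⊕ 𝔤[2] define: l₁(v) = [1]_r v for v ∈ 𝔤[1]_r; l₁(r) = [1]_l r for r ∈ 𝔤[1]_l; l₁(s) = [1]_r s − [1]_l s for s ∈ 𝔤[2]; binary brackets given by the 𝔤-bracket after shifting to 𝔤 in each slot (with [v,r]₂ = −[−2][[1]_r v, [1]_l r]_𝔤 for v ∈ 𝔤[1]_r, r ∈ 𝔤[1]_l), all other brackets zero. Then these data satisfy the L∞ Jacobi identities, defining a Lie 3-algebra structure. -/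
/-- The sign `(−1)^n`. -/
def ksign (n : ℤ) : ℤ := if Even n then 1 else -1

section

variable {L : Type*} [LieRing L] [LieAlgebra ℝ L]

/-- The 4-term graded space `𝔤 ⊕ 𝔤[1]_l ⊕ 𝔤[1]_r ⊕ 𝔤[2]`, with components
`(x₀, x_r, x_l, x₂)` of degrees `0, −1, −1, −2`. -/
abbrev V4 (L : Type*) := L × L × L × L

/-- Homogeneity predicate: degree 0 is the first component, degree −1 the two middle
(left/right) components, degree −2 the last component. -/
def deg4 (p : ℤ) (x : V4 L) : Prop :=
  (p = 0 ∧ x.2.1 = 0 ∧ x.2.2.1 = 0 ∧ x.2.2.2 = 0) ∨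
  (p = -1 ∧ x.1 = 0 ∧ x.2.2.2 = 0) ∨
  (p = -2 ∧ x.1 = 0 ∧ x.2.1 = 0 ∧ x.2.2.1 = 0)

/-- `l₁`: `l₁(v) = [1]_r v`, `l₁(r) = [1]_l r` (landing in `𝔤`), and
`l₁(s) = [1]_r s − [1]_l s` for `s ∈ 𝔤[2]`. -/
def l1map (x : V4 L) : V4 L := (x.2.1 + x.2.2.1, x.2.2.2, - x.2.2.2, 0)

/-- `l₂`: the binary brackets given by the `𝔤`-bracket after shifting to `𝔤` in each slot,
with `[v,r]₂ = −[−2][[1]_r v, [1]_l r]_𝔤`, extended bilinearly (all other brackets zero). -/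
def l2map (x y : V4 L) : V4 L :=
  (⁅x.1, y.1⁆,
   ⁅x.1, y.2.1⁆ - ⁅y.1, x.2.1⁆,
   ⁅x.1, y.2.2.1⁆ - ⁅y.1, x.2.2.1⁆,
   ⁅x.1, y.2.2.2⁆ - ⁅y.1, x.2.2.2⁆ - ⁅x.2.1, y.2.2.1⁆ - ⁅y.2.1, x.2.2.1⁆)


section Helpers
variable {L : Type*} [LieRing L] [LieAlgebra ℝ L]

private lemma jacH (a b c : L) : ⁅b, ⁅a, c⁆⁆ = ⁅c, ⁅a, b⁆⁆ + (-1 : ℤ) • ⁅a, ⁅c, b⁆⁆ := by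
  have h : -⁅b, ⁅a, c⁆⁆ = ⁅a, ⁅c, b⁆⁆ - ⁅c, ⁅a, b⁆⁆ :=
    (lie_skew ⁅a, c⁆ b).trans (lie_lie a c b)
  rw [neg_eq_iff_eq_neg] at h
  rw [h, neg_one_zsmul]; abel

private lemma sk0H (a b : L) : (0 : L) = ⁅a, b⁆ + ⁅b, a⁆ := by
  rw [← lie_skew a b]; abel

private lemma lem1H (a b c d : L) :
    ⁅c, a⁆ + (-1 : ℤ) • ⁅d, b⁆ = ⁅b, d⁆ + (-1 : ℤ) • ⁅a, c⁆ := by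
  simp only [neg_one_zsmul]; rw [← lie_skew c a, ← lie_skew d b]; abel

private lemma lem2aH (a b c d : L) :
    ⁅d, a⁆ + (-1 : ℤ) • ⁅c, b⁆ = ⁅d, a⁆ + (⁅a, c⁆ + (⁅b, c⁆ + ⁅c, a⁆)) := by
  simp only [neg_one_zsmul]; rw [← lie_skew b c, ← lie_skew a c]; abel

private lemma lem2bH (a b c d : L) :
    (-1 : ℤ) • ⁅d, a⁆ + ⁅c, b⁆ = ⁅c, b⁆ + (⁅a, d⁆ + (⁅b, d⁆ + ⁅d, b⁆)) := by
  simp only [neg_one_zsmul]; rw [← lie_skew a d, ← lie_skew b d]; abel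

private lemma lem5H (a b c d e : L) :
    ⁅b, ⁅a, e⁆⁆ + ((-1 : ℤ) • ⁅a, ⁅b, e⁆⁆ + (-1 : ℤ) • ⁅d, ⁅a, c⁆⁆) =
      (-1 : ℤ) • ⁅d, ⁅a, c⁆⁆ + ⁅e, ⁅a, b⁆⁆ := by
  rw [jacH a b e]; simp only [neg_one_zsmul]
  rw [← lie_skew b e]; simp only [lie_neg]; abel

private lemma lem6H (a b c d e : L) :
    ⁅a, ⁅b, e⁆⁆ + ((-1 : ℤ) • ⁅b, ⁅a, e⁆⁆ + (-1 : ℤ) • ⁅d, ⁅c, a⁆⁆) =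
      (-1 : ℤ) • ⁅e, ⁅a, b⁆⁆ + ⁅d, ⁅a, c⁆⁆ := by
  rw [jacH a b e]; simp only [neg_one_zsmul]
  rw [← lie_skew c a, ← lie_skew b e]; simp only [lie_neg]; abel

private lemma lem7H (a b c d e : L) :
    ⁅a, ⁅b, e⁆⁆ + (-1 : ℤ) • ⁅a, ⁅c, d⁆⁆ =
      ⁅a, ⁅b, e⁆⁆ + ((-1 : ℤ) • ⁅a, ⁅c, d⁆⁆ + (⁅c, ⁅a, d⁆⁆ + ((-1 : ℤ) • ⁅b, ⁅a, e⁆⁆ +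
        ((-1 : ℤ) • ⁅d, ⁅a, c⁆⁆ + (⁅a, ⁅d, c⁆⁆ + (⁅e, ⁅a, b⁆⁆ + (-1 : ℤ) • ⁅a, ⁅e, b⁆⁆)))))) := by
  rw [jacH a c d, jacH a b e]; simp only [neg_one_zsmul]; abel

end Helpers

/-- For a Lie algebra `𝔤`, the data `l₁`, `l₂` above (with `l₃ = l₄ = 0`) on
`𝔤 ⊕ 𝔤[1]_l ⊕ 𝔤[1]_r ⊕ 𝔤[2]` satisfy the L∞ Jacobi identities, defining a (strict)
Lie 3-algebra structure: `l₁∘l₁ = 0`, graded antisymmetry of `l₂`, `l₁` is a graded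
derivation of `l₂`, and `l₂` satisfies the graded Jacobi identity. -/

theorem stmt16 :
    (∀ x : V4 L, l1map (l1map x) = 0) ∧
    (∀ (p q : ℤ) (x y : V4 L), deg4 p x → deg4 q y →
        l2map x y = - (ksign (p * q) • l2map y x)) ∧
    (∀ (p q : ℤ) (x y : V4 L), deg4 p x → deg4 q y →
        l1map (l2map x y) = l2map (l1map x) y + ksign p • l2map x (l1map y)) ∧
    (∀ (p q r : ℤ) (x y z : V4 L), deg4 p x → deg4 q y → deg4 r z →
        l2map (l2map x y) z
          = l2map x (l2map y z) - ksign (p * q) • l2map y (l2map x z)) := by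
  refine ⟨?_, ?_, ?_, ?_⟩
  · intro x
    simp [l1map, Prod.ext_iff]
  · rintro p q x y hx hy
    rcases hx with ⟨rfl, h1, h2, h3⟩ | ⟨rfl, h1, h2⟩ | ⟨rfl, h1, h2, h3⟩ <;>
    rcases hy with ⟨rfl, g1, g2, g3⟩ | ⟨rfl, g1, g2⟩ | ⟨rfl, g1, g2, g3⟩ <;>
      simp only [l2map, ksign, Prod.ext_iff] <;>
      norm_num [h1, h2, g1, g2] <;>
      (try simp [h3]) <;> (try simp [g3]) <;>
      (first
        | abel1
        | skip) <;>
      (first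
        | abel1
        | abel_nf) <;>
      (first
        | abel1
        | exact lem1H _ _ _ _
        | exact ⟨lem2aH _ _ _ _, lem2bH _ _ _ _⟩
        | exact sk0H _ _
        | exact jacH _ _ _
        | exact ⟨jacH _ _ _, jacH _ _ _⟩
        | exact lem5H _ _ _ _ _
        | exact lem6H _ _ _ _ _
        | exact lem7H _ _ _ _ _)
  · rintro p q x y hx hy
    rcases hx with ⟨rfl, h1, h2, h3⟩ | ⟨rfl, h1, h2⟩ | ⟨rfl, h1, h2, h3⟩ <;>
    rcases hy with ⟨rfl, g1, g2, g3⟩ | ⟨rfl, g1, g2⟩ | ⟨rfl, g1, g2, g3⟩ <;>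
      simp only [l1map, l2map, ksign, Prod.ext_iff] <;>
      norm_num [h1, h2, g1, g2] <;>
      (try simp [h3]) <;> (try simp [g3]) <;>
      (first
        | abel1
        | skip) <;>
      (first
        | abel1
        | abel_nf) <;>
      (first
        | abel1
        | exact lem1H _ _ _ _
        | exact ⟨lem2aH _ _ _ _, lem2bH _ _ _ _⟩
        | exact sk0H _ _
        | exact jacH _ _ _
        | exact ⟨jacH _ _ _, jacH _ _ _⟩
        | exact lem5H _ _ _ _ _
        | exact lem6H _ _ _ _ _
        | exact lem7H _ _ _ _ _)
  · rintro p q r x y z hx hy hz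
    rcases hx with ⟨rfl, h1, h2, h3⟩ | ⟨rfl, h1, h2⟩ | ⟨rfl, h1, h2, h3⟩ <;>
    rcases hy with ⟨rfl, g1, g2, g3⟩ | ⟨rfl, g1, g2⟩ | ⟨rfl, g1, g2, g3⟩ <;>
    rcases hz with ⟨rfl, k1', k2', k3'⟩ | ⟨rfl, k1', k2'⟩ | ⟨rfl, k1', k2', k3'⟩ <;>
      simp only [l2map, ksign, Prod.ext_iff] <;>
      norm_num [h1, h2, g1, g2, k1', k2', lie_lie] <;>
      (try simp [h3]) <;> (try simp [g3]) <;> (try simp [k3']) <;>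
      (first
        | abel1
        | skip) <;>
      (first
        | abel1
        | abel_nf) <;>
      (first
        | abel1
        | exact lem1H _ _ _ _
        | exact ⟨lem2aH _ _ _ _, lem2bH _ _ _ _⟩
        | exact sk0H _ _
        | exact jacH _ _ _
        | exact ⟨jacH _ _ _, jacH _ _ _⟩
        | exact lem5H _ _ _ _ _
        | exact lem6H _ _ _ _ _
        | exact lem7H _ _ _ _ _)


end
end
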